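/- For all integers r ≥ 2 and s ≥ 2, the monotone cycles satisfy R_<(MC_r, MC_s) = 2rs - 3r - 3s + 6. -/
import Mathlib

/-- A copy of the ordered graph `G` on `[m]` in color `b` in the coloring `c` of the edges of
the complete graph on `[N]` (a pair `{a, b}` with `a < b` has color `c a b`). -/
def HasOrdCopy {m N : ℕ} (G : SimpleGraph (Fin m)) (c : Fin N → Fin N → Bool) (b : Bool) : Prop :=
  ∃ f : Fin m → Fin N, StrictMono f ∧ ∀ i j : Fin m, i < j → G.Adj i j → c (f i) (f j) = b

/-- The ordered Ramsey number `R_<(G, H)`: red is `true`, blue is `false`. -/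
noncomputable def ordRamsey {m m' : ℕ} (G : SimpleGraph (Fin m)) (H : SimpleGraph (Fin m')) : ℕ :=
  sInf {N | ∀ c : Fin N → Fin N → Bool, HasOrdCopy G c true ∨ HasOrdCopy H c false}

/-- The monotone cycle `MC_n` on `[n]`: the monotone path edges `{i, i+1}` together with the
edge `{1, n}` (0-indexed: `{0, n-1}`). -/
def monotoneCycle (n : ℕ) : SimpleGraph (Fin n) :=
  SimpleGraph.fromRel
    (fun a b => (b : ℕ) = (a : ℕ) + 1 ∨ ((a : ℕ) = 0 ∧ (b : ℕ) = n - 1))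


def chainLen {N : ℕ} (pred : Fin N → Fin N → Bool) (v : Fin N) : ℕ :=
  max 1 ((Finset.univ.filter (fun u => u < v)).attach.sup
    (fun u => if pred u.1 v then chainLen pred u.1 + 1 else 0))
termination_by v.val
decreasing_by
  have := (Finset.mem_filter.mp u.2).2
  exact this

lemma chainLen_pos {N : ℕ} (pred : Fin N → Fin N → Bool) (v : Fin N) :
    1 ≤ chainLen pred v := by
  rw [chainLen]; exact le_max_left _ _

lemma chainLen_lt {N : ℕ} (pred : Fin N → Fin N → Bool) {u v : Fin N}
    (h : u < v) (hp : pred u v = true) : chainLen pred u < chainLen pred v := by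
  conv_rhs => rw [chainLen]
  have hm : u ∈ Finset.univ.filter (fun w => w < v) := by simp [h]
  have hle := Finset.le_sup (f := fun u' : {x // x ∈ Finset.univ.filter (fun w => w < v)} =>
    if pred u'.1 v then chainLen pred u'.1 + 1 else 0) (Finset.mem_attach _ ⟨u, hm⟩)
  simp only [hp, if_true] at hle
  exact lt_of_lt_of_le (Nat.lt_succ_self _) (hle.trans (le_max_right 1 _))

/-- Realize a chain of length `chainLen pred v` ending at `v`. -/
lemma exists_chain {N : ℕ} (pred : Fin N → Fin N → Bool) (v : Fin N) :
    ∃ g : ℕ → Fin N,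
      (∀ k l, k < l → l < chainLen pred v → g k < g l) ∧
      g (chainLen pred v - 1) = v ∧
      (∀ k, k + 1 < chainLen pred v → pred (g k) (g (k+1)) = true) := by
  have H : ∀ n : ℕ, ∀ v : Fin N, v.val = n → ∃ g : ℕ → Fin N,
      (∀ k l, k < l → l < chainLen pred v → g k < g l) ∧
      g (chainLen pred v - 1) = v ∧
      (∀ k, k + 1 < chainLen pred v → pred (g k) (g (k+1)) = true) := by
    intro n
    induction n using Nat.strong_induction_on with
    | _ n IH =>
      intro v hv
      set T := (Finset.univ.filter (fun u => u < v)).attach.sup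
        (fun u => if pred u.1 v then chainLen pred u.1 + 1 else 0) with hT
      have hCL : chainLen pred v = max 1 T := by rw [chainLen]
      by_cases hT1 : T ≤ 1
      · -- chainLen = 1 (entries are 0 or ≥ 2)
        have h1 : chainLen pred v = 1 := by
          rcases Nat.lt_or_ge T 1 with h | h
          · omega
          · -- T = 1 : impossible to attain? entries are 0 or ≥ 2, sup = 1 impossible...
            have hT1' : T = 1 := le_antisymm hT1 h
            have hne : ((Finset.univ.filter (fun u => u < v)).attach).Nonempty := by
              by_contra hemp
              rw [Finset.not_nonempty_iff_eq_empty] at hemp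
              rw [hemp, Finset.sup_empty] at hT; simp only [Nat.bot_eq_zero] at hT
              omega
            obtain ⟨u₀, _, hu₀⟩ := Finset.exists_mem_eq_sup _ hne
              (fun u : {x // x ∈ Finset.univ.filter (fun w => w < v)} =>
                if pred u.1 v then chainLen pred u.1 + 1 else 0)
            rw [← hT, hT1'] at hu₀
            by_cases hp : pred u₀.1 v = true
            · rw [if_pos hp] at hu₀
              have := chainLen_pos pred u₀.1
              omega
            · rw [if_neg hp] at hu₀; omega
        refine ⟨fun _ => v, ?_, by rw [h1], ?_⟩
        · intro k l hkl hl; rw [h1] at hl; omega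
        · intro k hk; rw [h1] at hk; omega
      · push_neg at hT1
        have hCL2 : chainLen pred v = T := by omega
        have hne : ((Finset.univ.filter (fun u => u < v)).attach).Nonempty := by
          by_contra hemp
          rw [Finset.not_nonempty_iff_eq_empty] at hemp
          rw [hemp, Finset.sup_empty] at hT; simp only [Nat.bot_eq_zero] at hT
          omega
        obtain ⟨u₀, _, hu₀⟩ := Finset.exists_mem_eq_sup _ hne
          (fun u : {x // x ∈ Finset.univ.filter (fun w => w < v)} =>
            if pred u.1 v then chainLen pred u.1 + 1 else 0)
        rw [← hT] at hu₀
        have hp : pred u₀.1 v = true := by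
          by_contra hp; rw [if_neg hp] at hu₀; omega
        rw [if_pos hp] at hu₀
        have hu₀v : u₀.1 < v := (Finset.mem_filter.mp u₀.2).2
        have hlt : u₀.1.val < n := by rw [← hv]; exact hu₀v
        obtain ⟨g', hg'mono, hg'end, hg'pred⟩ := IH u₀.1.val hlt u₀.1 rfl
        set n' := chainLen pred u₀.1 with hn'
        have hn'1 : 1 ≤ n' := chainLen_pos pred u₀.1
        have hTn' : T = n' + 1 := by omega
        refine ⟨fun k => if k < T - 1 then g' k else v, ?_, ?_, ?_⟩
        · intro k l hkl hl
          dsimp only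
          by_cases hlT : l < T - 1
          · rw [if_pos (by omega), if_pos hlT]
            exact hg'mono k l hkl (by omega)
          · rw [if_neg hlT]
            by_cases hkT : k < T - 1
            · rw [if_pos hkT]
              have : g' k ≤ g' (n' - 1) := by
                rcases Nat.lt_or_ge k (n' - 1) with h | h
                · exact le_of_lt (hg'mono k (n' - 1) h (by omega))
                · have : k = n' - 1 := by omega
                  rw [this]
              rw [hg'end] at this
              exact lt_of_le_of_lt this hu₀v
            · omega
        · dsimp only; rw [if_neg (by omega)]
        · intro k hk
          dsimp only
          by_cases hk1 : k + 1 < T - 1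
          · rw [if_pos (by omega), if_pos hk1]
            exact hg'pred k (by omega)
          · have hk1' : k + 1 = T - 1 := by omega
            rw [if_pos (by omega), if_neg (by omega)]
            have : k = n' - 1 := by omega
            rw [this, hg'end]
            exact hp
  exact H v.val v rfl

lemma mc_adj_of_lt {m : ℕ} {i j : Fin m} (hij : i < j) (h : (monotoneCycle m).Adj i j) :
    (j : ℕ) = (i : ℕ) + 1 ∨ ((i : ℕ) = 0 ∧ (j : ℕ) = m - 1) := by
  have hij' : (i : ℕ) < (j : ℕ) := hij
  have hjm : (j : ℕ) < m := j.isLt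
  rw [monotoneCycle, SimpleGraph.fromRel_adj] at h
  obtain ⟨hne, h | h⟩ := h
  · exact h
  · rcases h with h | h
    · omega
    · omega

lemma mc_adj_succ {m : ℕ} {i j : Fin m} (h : (j : ℕ) = (i : ℕ) + 1) :
    (monotoneCycle m).Adj i j := by
  rw [monotoneCycle, SimpleGraph.fromRel_adj]
  exact ⟨by intro he; rw [he] at h; omega, Or.inl (Or.inl h)⟩

lemma mc_adj_cyc {m : ℕ} (hm : 2 ≤ m) {i j : Fin m} (hi : (i : ℕ) = 0)
    (hj : (j : ℕ) = m - 1) : (monotoneCycle m).Adj i j := by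
  rw [monotoneCycle, SimpleGraph.fromRel_adj]
  refine ⟨?_, Or.inl (Or.inr ⟨hi, hj⟩)⟩
  intro he
  rw [he, hj] at hi
  omega

lemma hasOrdCopy_clique {N n : ℕ} (c : Fin N → Fin N → Bool) (bc : Bool)
    (T : Finset (Fin N)) (hcard : T.card = n)
    (hp : ∀ u ∈ T, ∀ v ∈ T, u < v → c u v = bc) :
    HasOrdCopy (monotoneCycle n) c bc := by
  refine ⟨fun i => (T.orderIsoOfFin hcard i : Fin N), ?_, ?_⟩
  · intro i j hij
    exact (T.orderIsoOfFin hcard).strictMono hij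
  · intro i j hij _
    exact hp _ (T.orderIsoOfFin hcard i).2 _ (T.orderIsoOfFin hcard j).2
      ((T.orderIsoOfFin hcard).strictMono hij)

lemma hasOrdCopy_apexChain {N n : ℕ} (hn : 2 ≤ n) (c : Fin N → Fin N → Bool) (bc : Bool)
    (x₀ : Fin N) (g : ℕ → Fin N)
    (hmono : ∀ k l, k < l → l < n - 1 → g k < g l)
    (hx : ∀ k, k < n - 1 → x₀ < g k ∧ c x₀ (g k) = bc)
    (hcons : ∀ k, k + 1 < n - 1 → c (g k) (g (k+1)) = bc) :
    HasOrdCopy (monotoneCycle n) c bc := by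
  refine ⟨fun i => if i.val = 0 then x₀ else g (i.val - 1), ?_, ?_⟩
  · intro i j hij
    have hij' : (i : ℕ) < (j : ℕ) := hij
    have hjm : (j : ℕ) < n := j.isLt
    dsimp only
    rw [if_neg (by omega : ¬ (j : ℕ) = 0)]
    by_cases hi : (i : ℕ) = 0
    · rw [if_pos hi]
      exact (hx ((j : ℕ) - 1) (by omega)).1
    · rw [if_neg hi]
      exact hmono _ _ (by omega) (by omega)
  · intro i j hij hadj
    have hij' : (i : ℕ) < (j : ℕ) := hij
    have hjm : (j : ℕ) < n := j.isLt
    have hc := mc_adj_of_lt hij hadj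
    dsimp only
    rw [if_neg (by omega : ¬ (j : ℕ) = 0)]
    rcases hc with h | ⟨hi0, hj1⟩
    · by_cases hi : (i : ℕ) = 0
      · rw [if_pos hi]
        exact (hx ((j : ℕ) - 1) (by omega)).2
      · rw [if_neg hi]
        rw [show (j : ℕ) - 1 = ((i : ℕ) - 1) + 1 from by omega]
        exact hcons _ (by omega)
    · rw [if_pos hi0]
      exact (hx ((j : ℕ) - 1) (by omega)).2

lemma nbhd {N : ℕ} (c : Fin N → Fin N → Bool) (bc : Bool) {m n : ℕ} (hm : 2 ≤ m) (hn : 2 ≤ n)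
    (x₀ : Fin N) (S : Finset (Fin N))
    (hS : ∀ v ∈ S, x₀ < v ∧ c x₀ v = bc)
    (hcard : (m-2)*(n-1) + 1 ≤ S.card) :
    HasOrdCopy (monotoneCycle m) c bc ∨ HasOrdCopy (monotoneCycle n) c (!bc) := by
  classical
  set pred : Fin N → Fin N → Bool := fun u v => decide (u ∈ S ∧ v ∈ S ∧ c u v = bc) with hpred
  by_cases hbig : ∃ v ∈ S, m - 1 ≤ chainLen pred v
  · left
    obtain ⟨v, hv, hlen⟩ := hbig
    obtain ⟨g, hmono, hend, hcons⟩ := exists_chain pred v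
    set L := chainLen pred v with hL
    set d := L - (m - 1) with hd
    have hmem : ∀ k, k < L → g k ∈ S := by
      intro k hk
      rcases Nat.lt_or_ge k (L-1) with h | h
      · have h2 := hcons k (by omega)
        rw [hpred] at h2
        simp only [decide_eq_true_eq] at h2
        exact h2.1
      · have : k = L - 1 := by omega
        rw [this, hend]
        exact hv
    apply hasOrdCopy_apexChain hm c bc x₀ (fun k => g (k + d))
    · intro k l hkl hl
      exact hmono _ _ (by omega) (by omega)
    · intro k hk
      have hmemk : g (k+d) ∈ S := hmem _ (by omega)
      exact hS _ hmemk
    · intro k hk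
      have h2 := hcons (k+d) (by omega)
      rw [hpred] at h2
      simp only [decide_eq_true_eq] at h2
      rw [show k+1+d = k+d+1 from by omega]
      exact h2.2.2
  · right
    push_neg at hbig
    have hlev : ∀ v ∈ S, chainLen pred v ∈ Finset.Icc 1 (m-2) := by
      intro v hv
      simp only [Finset.mem_Icc]
      refine ⟨chainLen_pos pred v, ?_⟩
      have := hbig v hv
      omega
    have hcard2 : (Finset.Icc 1 (m-2)).card * (n-1) < S.card := by
      rw [Nat.card_Icc]
      have : m - 2 + 1 - 1 = m - 2 := by omega
      rw [this]
      omega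
    obtain ⟨t, _, hfib⟩ := Finset.exists_lt_card_fiber_of_mul_lt_card_of_maps_to hlev hcard2
    have hfib' : n ≤ (S.filter fun v => chainLen pred v = t).card := by omega
    obtain ⟨T, hTsub, hTcard⟩ := Finset.exists_subset_card_eq hfib'
    apply hasOrdCopy_clique c (!bc) T hTcard
    intro u hu v hv huv
    have huS := Finset.mem_filter.mp (hTsub hu)
    have hvS := Finset.mem_filter.mp (hTsub hv)
    by_contra hne
    have hcb : c u v = bc := by
      cases hcv : c u v <;> cases bc <;> simp_all
    have hlt : chainLen pred u < chainLen pred v := by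
      apply chainLen_lt pred huv
      rw [hpred]
      simp [huS.1, hvS.1, hcb]
    rw [huS.2, hvS.2] at hlt
    omega


/-- The extremal coloring: apex `0`; `U`-block `1..a*(b+1)` with class `iC x = (x-1) % a`,
position `pC x = (x-1)/a`; `W`-block above with class `jC` and position `qC`. -/
def colC (a b x y : ℕ) : Bool :=
  if x = 0 then decide (y ≤ a * (b+1))
  else if y ≤ a * (b+1) then decide ((x-1) % a < (y-1) % a)
  else if x ≤ a * (b+1) then
    decide (((x-1) / a ≤ (y-1-a*(b+1)) / (a+1)) ↔ ((y-1-a*(b+1)) % (a+1) ≤ (x-1) % a))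
  else decide ((x-1-a*(b+1)) % (a+1) < (y-1-a*(b+1)) % (a+1))

namespace ColC

variable {a b : ℕ}

lemma apex (y : ℕ) : colC a b 0 y = decide (y ≤ a * (b+1)) := by
  rw [colC, if_pos rfl]

lemma uu {x y : ℕ} (hx : x ≠ 0) (hy : y ≤ a * (b+1)) :
    colC a b x y = decide ((x-1) % a < (y-1) % a) := by
  rw [colC, if_neg hx, if_pos hy]

lemma uw {x y : ℕ} (hx : x ≠ 0) (hx2 : x ≤ a * (b+1)) (hy : ¬ y ≤ a * (b+1)) :
    colC a b x y =
      decide (((x-1) / a ≤ (y-1-a*(b+1)) / (a+1)) ↔ ((y-1-a*(b+1)) % (a+1) ≤ (x-1) % a)) := by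
  rw [colC, if_neg hx, if_neg hy, if_pos hx2]

lemma ww {x y : ℕ} (hx : ¬ x ≤ a * (b+1)) (hy : ¬ y ≤ a * (b+1)) :
    colC a b x y = decide ((x-1-a*(b+1)) % (a+1) < (y-1-a*(b+1)) % (a+1)) := by
  rw [colC, if_neg (by omega : ¬ x = 0), if_neg hy, if_neg hx]

/-- U-block coordinate bounds. -/
lemma u_bounds {x : ℕ} (hx : 1 ≤ x) (hx2 : x ≤ a * (b+1)) :
    (x-1) % a < a ∧ (x-1) / a ≤ b := by
  have ha : 0 < a := by
    rcases Nat.eq_zero_or_pos a with h | h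
    · subst h; simp at hx2; omega
    · exact h
  constructor
  · exact Nat.mod_lt _ ha
  · have : (x-1) / a < b + 1 := by
      rw [Nat.div_lt_iff_lt_mul ha]
      calc x - 1 < a * (b+1) := by omega
        _ = (b+1) * a := by ring
    omega

/-- W-block coordinate bounds. -/
lemma w_bounds {x : ℕ} (hx : a * (b+1) < x) (hx2 : x < 1 + a * (b+1) + b * (a+1)) :
    (x-1-a*(b+1)) % (a+1) ≤ a ∧ (x-1-a*(b+1)) / (a+1) < b := by
  constructor
  · have := Nat.mod_lt (x-1-a*(b+1)) (show 0 < a+1 by omega)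
    omega
  · rw [Nat.div_lt_iff_lt_mul (show 0 < a+1 by omega)]
    have : x - 1 - a*(b+1) < b * (a+1) := by omega
    calc x - 1 - a*(b+1) < b * (a+1) := this
      _ = b * (a+1) := rfl

/-- Lexicographic fact in the U block. -/
lemma u_lex {x y : ℕ} (hx : 1 ≤ x) (hxy : x < y) (hy : y ≤ a * (b+1))
    (h : ¬ (x-1) % a < (y-1) % a) : (x-1) / a < (y-1) / a := by
  have ha : 0 < a := by
    rcases Nat.eq_zero_or_pos a with h0 | h0
    · subst h0; simp at hy; omega
    · exact h0
  have hdle : (x-1) / a ≤ (y-1) / a := Nat.div_le_div_right (by omega)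
  rcases lt_or_eq_of_le hdle with h1 | h1
  · exact h1
  · exfalso
    have e1 := Nat.div_add_mod (x-1) a
    have e2 := Nat.div_add_mod (y-1) a
    rw [h1] at e1
    omega

/-- Lexicographic fact in the W block. -/
lemma w_lex {x y : ℕ} (hx : a * (b+1) < x) (hxy : x < y)
    (h : ¬ (x-1-a*(b+1)) % (a+1) < (y-1-a*(b+1)) % (a+1)) :
    (x-1-a*(b+1)) / (a+1) < (y-1-a*(b+1)) / (a+1) := by
  have hdle : (x-1-a*(b+1)) / (a+1) ≤ (y-1-a*(b+1)) / (a+1) :=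
    Nat.div_le_div_right (by omega)
  rcases lt_or_eq_of_le hdle with h1 | h1
  · exact h1
  · exfalso
    have e1 := Nat.div_add_mod (x-1-a*(b+1)) (a+1)
    have e2 := Nat.div_add_mod (y-1-a*(b+1)) (a+1)
    rw [h1] at e1
    omega

end ColC

lemma seg_growth (φ F : ℕ → ℕ) {k₁ k₂ : ℕ} (h : k₁ ≤ k₂)
    (step : ∀ k, k₁ ≤ k → k < k₂ → φ (F k) < φ (F (k+1))) :
    φ (F k₁) + (k₂ - k₁) ≤ φ (F k₂) := by
  induction k₂, h using Nat.le_induction with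
  | base => simp
  | succ n hn ih =>
      have h1 : φ (F k₁) + (n - k₁) ≤ φ (F n) := ih (fun k hk hk' => step k hk (by omega))
      have h2 : φ (F n) < φ (F (n+1)) := step n hn (by omega)
      omega

lemma seg_anti (φ F : ℕ → ℕ) {k₁ k₂ : ℕ} (h : k₁ ≤ k₂)
    (step : ∀ k, k₁ ≤ k → k < k₂ → φ (F (k+1)) ≤ φ (F k)) :
    φ (F k₂) ≤ φ (F k₁) := by
  induction k₂, h using Nat.le_induction with
  | base => exact le_refl _
  | succ n hn ih =>
      have h1 := ih (fun k hk hk' => step k hk (by omega))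
      have h2 := step n hn (by omega)
      omega

section NoCycle

variable {a b : ℕ}

/-- The construction has no red monotone cycle with `a+2` vertices. -/
lemma noRed (F : ℕ → ℕ)
    (hmono : ∀ k l, k < l → l < a + 2 → F k < F l)
    (hlt : ∀ k, k < a + 2 → F k < 1 + a*(b+1) + b*(a+1))
    (hcons : ∀ k, k + 1 < a + 2 → colC a b (F k) (F (k+1)) = true)
    (hclos : colC a b (F 0) (F (a+1)) = true) : False := by
  have hmono' : ∀ k l, k ≤ l → l < a + 2 → F k ≤ F l := by
    intro k l hkl hl
    rcases lt_or_eq_of_le hkl with h | h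
    · exact le_of_lt (hmono k l h hl)
    · rw [h]
  by_cases hL : F (a+1) ≤ a*(b+1)
  · by_cases h0 : F 0 = 0
    · -- vertices 1..a+1 are in the U block; class grows too much
      have hsub : ∀ k, 1 ≤ k → k ≤ a+1 → 1 ≤ F k ∧ F k ≤ a*(b+1) := by
        intro k h1 h2
        have e1 : F 0 < F k := hmono 0 k (by omega) (by omega)
        have e2 : F k ≤ F (a+1) := hmono' k (a+1) h2 (by omega)
        omega
      have hg : ((F 1)-1) % a + (a+1 - 1) ≤ ((F (a+1))-1) % a := by
        apply seg_growth (fun x => (x-1) % a) F (by omega)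
        intro k hk1 hk2
        have h2 := hcons k (by omega)
        rw [ColC.uu (by have := (hsub k hk1 (by omega)).1; omega)
          (hsub (k+1) (by omega) (by omega)).2] at h2
        exact of_decide_eq_true h2
      have hbd := (ColC.u_bounds (hsub (a+1) (by omega) le_rfl).1
        (hsub (a+1) (by omega) le_rfl).2).1
      omega
    · have hsub : ∀ k, k ≤ a+1 → 1 ≤ F k ∧ F k ≤ a*(b+1) := by
        intro k h2
        have e2 : F k ≤ F (a+1) := hmono' k (a+1) h2 (by omega)
        have e1 : F 0 ≤ F k := hmono' 0 k (by omega) (by omega)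
        omega
      have hg : ((F 0)-1) % a + (a+1 - 0) ≤ ((F (a+1))-1) % a := by
        apply seg_growth (fun x => (x-1) % a) F (by omega)
        intro k hk1 hk2
        have h2 := hcons k (by omega)
        rw [ColC.uu (by have := (hsub k (by omega)).1; omega)
          (hsub (k+1) (by omega)).2] at h2
        exact of_decide_eq_true h2
      have hbd := (ColC.u_bounds (hsub (a+1) le_rfl).1 (hsub (a+1) le_rfl).2).1
      omega
  · by_cases h0 : F 0 = 0
    · rw [h0, ColC.apex] at hclos
      exact hL (of_decide_eq_true hclos)
    · by_cases h0b : a*(b+1) < F 0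
      · -- all in W block: position q grows too much
        have hsub : ∀ k, k ≤ a+1 → a*(b+1) < F k := by
          intro k h2
          have := hmono' 0 k (by omega) (by omega)
          omega
        have hg : ((F 0)-1-a*(b+1)) % (a+1) + (a+1 - 0) ≤ ((F (a+1))-1-a*(b+1)) % (a+1) := by
          apply seg_growth (fun x => (x-1-a*(b+1)) % (a+1)) F (by omega)
          intro k hk1 hk2
          have h2 := hcons k (by omega)
          rw [ColC.ww (by have := hsub k (by omega); omega)
            (by have := hsub (k+1) (by omega); omega)] at h2
          exact of_decide_eq_true h2
        have hbd := (ColC.w_bounds (hsub (a+1) le_rfl) (hlt (a+1) (by omega))).1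
        omega
      · -- mixed case: F 0 in U, F (a+1) in W
        have h01 : 1 ≤ F 0 := by omega
        have h0U : F 0 ≤ a*(b+1) := by omega
        set M := Nat.findGreatest (fun k => F k ≤ a*(b+1)) (a+1) with hMdef
        have hM0 : F M ≤ a*(b+1) := by
          rw [hMdef]
          exact Nat.findGreatest_spec (P := fun k => F k ≤ a*(b+1)) (n := a+1) (m := 0)
            (by omega) h0U
        have hMle : M ≤ a+1 := Nat.findGreatest_le (a+1)
        have hMlt : M < a+1 := by
          rcases lt_or_eq_of_le hMle with h | h
          · exact h
          · exfalso; rw [h] at hM0; omega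
        have hM1 : a*(b+1) < F (M+1) := by
          have := Nat.findGreatest_is_greatest (P := fun k => F k ≤ a*(b+1))
            (show M < M+1 by omega) (show M+1 ≤ a+1 by omega)
          omega
        have hUseg : ∀ k, k ≤ M → 1 ≤ F k ∧ F k ≤ a*(b+1) := by
          intro k hk
          have e1 : F 0 ≤ F k := hmono' 0 k (by omega) (by omega)
          have e2 : F k ≤ F M := hmono' k M hk (by omega)
          omega
        have hWseg : ∀ k, M+1 ≤ k → k ≤ a+1 → a*(b+1) < F k := by
          intro k h1 h2
          have := hmono' (M+1) k h1 (by omega)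
          omega
        have hg1 : ((F 0)-1) % a + (M - 0) ≤ ((F M)-1) % a := by
          apply seg_growth (fun x => (x-1) % a) F (by omega)
          intro k hk1 hk2
          have h2 := hcons k (by omega)
          rw [ColC.uu (by have := (hUseg k (by omega)).1; omega)
            (hUseg (k+1) (by omega)).2] at h2
          exact of_decide_eq_true h2
        have hg2 : ((F (M+1))-1-a*(b+1)) % (a+1) + (a+1 - (M+1))
            ≤ ((F (a+1))-1-a*(b+1)) % (a+1) := by
          apply seg_growth (fun x => (x-1-a*(b+1)) % (a+1)) F (by omega)
          intro k hk1 hk2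
          have h2 := hcons k (by omega)
          rw [ColC.ww (by have := hWseg k (by omega) (by omega); omega)
            (by have := hWseg (k+1) (by omega) (by omega); omega)] at h2
          exact of_decide_eq_true h2
        have hcr := hcons M (by omega)
        rw [ColC.uw (by have := (hUseg M le_rfl).1; omega) (hUseg M le_rfl).2
          (by have := hM1; omega)] at hcr
        have hcr' := of_decide_eq_true hcr
        rw [ColC.uw (by omega) h0U (by omega)] at hclos
        have hcl' := of_decide_eq_true hclos
        have hpF : (F 0 - 1)/a ≤ (F M - 1)/a :=
          Nat.div_le_div_right (by have := hmono' 0 M (by omega) (by omega); omega)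
        have hjW : (F (M+1)-1-a*(b+1))/(a+1) ≤ (F (a+1)-1-a*(b+1))/(a+1) :=
          Nat.div_le_div_right (by have := hmono' (M+1) (a+1) (by omega) (by omega); omega)
        have hiM := (ColC.u_bounds (hUseg M le_rfl).1 (hUseg M le_rfl).2).1
        have hqL := (ColC.w_bounds (hWseg (a+1) (by omega) le_rfl) (hlt (a+1) (by omega))).1
        by_cases hc : (F M - 1)/a ≤ (F (M+1)-1-a*(b+1))/(a+1)
        · have hP0 : (F 0 - 1)/a ≤ (F (a+1) - 1 - a*(b+1))/(a+1) :=
            le_trans (le_trans hpF hc) hjW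
          have hQ0 : (F (a+1)-1-a*(b+1)) % (a+1) ≤ (F 0-1) % a := hcl'.mp hP0
          omega
        · have hQm : ¬ ((F (M+1)-1-a*(b+1)) % (a+1) ≤ (F M-1) % a) :=
            fun hq => hc (hcr'.mpr hq)
          omega

end NoCycle

section NoCycleBlue

variable {a b : ℕ}

/-- The construction has no blue monotone cycle with `b+2` vertices. -/
lemma noBlue (F : ℕ → ℕ)
    (hmono : ∀ k l, k < l → l < b + 2 → F k < F l)
    (hlt : ∀ k, k < b + 2 → F k < 1 + a*(b+1) + b*(a+1))
    (hcons : ∀ k, k + 1 < b + 2 → colC a b (F k) (F (k+1)) = false)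
    (hclos : colC a b (F 0) (F (b+1)) = false) : False := by
  have hmono' : ∀ k l, k ≤ l → l < b + 2 → F k ≤ F l := by
    intro k l hkl hl
    rcases lt_or_eq_of_le hkl with h | h
    · exact le_of_lt (hmono k l h hl)
    · rw [h]
  by_cases hL : F (b+1) ≤ a*(b+1)
  · by_cases h0 : F 0 = 0
    · rw [h0, ColC.apex] at hclos
      exact (of_decide_eq_false hclos) hL
    · -- all in U block: position p grows too much
      have hsub : ∀ k, k ≤ b+1 → 1 ≤ F k ∧ F k ≤ a*(b+1) := by
        intro k h2
        have e2 : F k ≤ F (b+1) := hmono' k (b+1) h2 (by omega)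
        have e1 : F 0 ≤ F k := hmono' 0 k (by omega) (by omega)
        omega
      have hg : ((F 0)-1) / a + (b+1 - 0) ≤ ((F (b+1))-1) / a := by
        apply seg_growth (fun x => (x-1) / a) F (by omega)
        intro k hk1 hk2
        have h2 := hcons k (by omega)
        rw [ColC.uu (by have := (hsub k (by omega)).1; omega)
          (hsub (k+1) (by omega)).2] at h2
        exact ColC.u_lex (hsub k (by omega)).1 (hmono k (k+1) (by omega) (by omega))
          (hsub (k+1) (by omega)).2 (of_decide_eq_false h2)
      have hbd := (ColC.u_bounds (hsub (b+1) le_rfl).1 (hsub (b+1) le_rfl).2).2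
      have hnn : 0 ≤ (F 0 - 1)/a := Nat.zero_le _
      omega
  · by_cases h0 : F 0 = 0
    · -- apex + W block
      have h1W : a*(b+1) < F 1 := by
        have h2 := hcons 0 (by omega)
        rw [h0, ColC.apex] at h2
        exact Nat.lt_of_not_le (of_decide_eq_false h2)
      have hsub : ∀ k, 1 ≤ k → k ≤ b+1 → a*(b+1) < F k := by
        intro k hk1 hk2
        have := hmono' 1 k hk1 (by omega)
        omega
      have hg : ((F 1)-1-a*(b+1)) / (a+1) + (b+1 - 1) ≤ ((F (b+1))-1-a*(b+1)) / (a+1) := by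
        apply seg_growth (fun x => (x-1-a*(b+1)) / (a+1)) F (by omega)
        intro k hk1 hk2
        have h2 := hcons k (by omega)
        rw [ColC.ww (by have := hsub k hk1 (by omega); omega)
          (by have := hsub (k+1) (by omega) (by omega); omega)] at h2
        exact ColC.w_lex (hsub k hk1 (by omega)) (hmono k (k+1) (by omega) (by omega))
          (of_decide_eq_false h2)
      have hbd := (ColC.w_bounds (hsub (b+1) (by omega) le_rfl) (hlt (b+1) (by omega))).2
      have hnn : 0 ≤ (F 1 - 1 - a*(b+1))/(a+1) := Nat.zero_le _
      omega
    · by_cases h0b : a*(b+1) < F 0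
      · have hsub : ∀ k, k ≤ b+1 → a*(b+1) < F k := by
          intro k h2
          have := hmono' 0 k (by omega) (by omega)
          omega
        have hg : ((F 0)-1-a*(b+1)) / (a+1) + (b+1 - 0) ≤ ((F (b+1))-1-a*(b+1)) / (a+1) := by
          apply seg_growth (fun x => (x-1-a*(b+1)) / (a+1)) F (by omega)
          intro k hk1 hk2
          have h2 := hcons k (by omega)
          rw [ColC.ww (by have := hsub k (by omega); omega)
            (by have := hsub (k+1) (by omega); omega)] at h2
          exact ColC.w_lex (hsub k (by omega)) (hmono k (k+1) (by omega) (by omega))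
            (of_decide_eq_false h2)
        have hbd := (ColC.w_bounds (hsub (b+1) le_rfl) (hlt (b+1) (by omega))).2
        have hnn : 0 ≤ (F 0 - 1 - a*(b+1))/(a+1) := Nat.zero_le _
        omega
      · -- mixed case
        have h01 : 1 ≤ F 0 := by omega
        have h0U : F 0 ≤ a*(b+1) := by omega
        set M := Nat.findGreatest (fun k => F k ≤ a*(b+1)) (b+1) with hMdef
        have hM0 : F M ≤ a*(b+1) := by
          rw [hMdef]
          exact Nat.findGreatest_spec (P := fun k => F k ≤ a*(b+1)) (n := b+1) (m := 0)
            (by omega) h0U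
        have hMle : M ≤ b+1 := Nat.findGreatest_le (b+1)
        have hMlt : M < b+1 := by
          rcases lt_or_eq_of_le hMle with h | h
          · exact h
          · exfalso; rw [h] at hM0; omega
        have hM1 : a*(b+1) < F (M+1) := by
          have := Nat.findGreatest_is_greatest (P := fun k => F k ≤ a*(b+1))
            (show M < M+1 by omega) (show M+1 ≤ b+1 by omega)
          omega
        have hUseg : ∀ k, k ≤ M → 1 ≤ F k ∧ F k ≤ a*(b+1) := by
          intro k hk
          have e1 : F 0 ≤ F k := hmono' 0 k (by omega) (by omega)
          have e2 : F k ≤ F M := hmono' k M hk (by omega)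
          omega
        have hWseg : ∀ k, M+1 ≤ k → k ≤ b+1 → a*(b+1) < F k := by
          intro k h1 h2
          have := hmono' (M+1) k h1 (by omega)
          omega
        have hg1 : ((F 0)-1) / a + (M - 0) ≤ ((F M)-1) / a := by
          apply seg_growth (fun x => (x-1) / a) F (by omega)
          intro k hk1 hk2
          have h2 := hcons k (by omega)
          rw [ColC.uu (by have := (hUseg k (by omega)).1; omega)
            (hUseg (k+1) (by omega)).2] at h2
          exact ColC.u_lex (hUseg k (by omega)).1 (hmono k (k+1) (by omega) (by omega))
            (hUseg (k+1) (by omega)).2 (of_decide_eq_false h2)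
        have hg2 : ((F (M+1))-1-a*(b+1)) / (a+1) + (b+1 - (M+1))
            ≤ ((F (b+1))-1-a*(b+1)) / (a+1) := by
          apply seg_growth (fun x => (x-1-a*(b+1)) / (a+1)) F (by omega)
          intro k hk1 hk2
          have h2 := hcons k (by omega)
          rw [ColC.ww (by have := hWseg k (by omega) (by omega); omega)
            (by have := hWseg (k+1) (by omega) (by omega); omega)] at h2
          exact ColC.w_lex (hWseg k (by omega) (by omega))
            (hmono k (k+1) (by omega) (by omega)) (of_decide_eq_false h2)
        -- class of U-vertices non-increasing along blue path
        have ha1 : ((F M)-1) % a ≤ ((F 0)-1) % a := by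
          apply seg_anti (fun x => (x-1) % a) F (by omega : (0:ℕ) ≤ M)
          intro k hk1 hk2
          have h2 := hcons k (by omega)
          rw [ColC.uu (by have := (hUseg k (by omega)).1; omega)
            (hUseg (k+1) (by omega)).2] at h2
          have := of_decide_eq_false h2
          omega
        -- position of W-vertices non-increasing along blue path
        have ha2 : ((F (b+1))-1-a*(b+1)) % (a+1) ≤ ((F (M+1))-1-a*(b+1)) % (a+1) := by
          apply seg_anti (fun x => (x-1-a*(b+1)) % (a+1)) F (by omega : M+1 ≤ b+1)
          intro k hk1 hk2
          have h2 := hcons k (by omega)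
          rw [ColC.ww (by have := hWseg k (by omega) (by omega); omega)
            (by have := hWseg (k+1) (by omega) (by omega); omega)] at h2
          have := of_decide_eq_false h2
          omega
        have hcr := hcons M (by omega)
        rw [ColC.uw (by have := (hUseg M le_rfl).1; omega) (hUseg M le_rfl).2
          (by have := hM1; omega)] at hcr
        have hcr' := of_decide_eq_false hcr
        rw [ColC.uw (by omega) h0U (by omega)] at hclos
        have hcl' := of_decide_eq_false hclos
        have hpM := (ColC.u_bounds (hUseg M le_rfl).1 (hUseg M le_rfl).2).2
        have hjL := (ColC.w_bounds (hWseg (b+1) (by omega) le_rfl) (hlt (b+1) (by omega))).2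
        have hnn1 : 0 ≤ (F 0 - 1)/a := Nat.zero_le _
        have hnn2 : 0 ≤ (F M - 1)/a := Nat.zero_le _
        have hnn3 : 0 ≤ (F (M+1) - 1 - a*(b+1))/(a+1) := Nat.zero_le _
        have hnn4 : 0 ≤ (F (b+1) - 1 - a*(b+1))/(a+1) := Nat.zero_le _
        by_cases hc : (F M - 1)/a ≤ (F (M+1) - 1 - a*(b+1))/(a+1)
        · omega
        · have hQ : (F (M+1) - 1 - a*(b+1)) % (a+1) ≤ (F M - 1) % a := by
            by_contra hq
            exact hcr' ⟨fun hp => absurd hp hc, fun hq2 => absurd hq2 hq⟩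
          have hQ0 : (F (b+1) - 1 - a*(b+1)) % (a+1) ≤ (F 0 - 1) % a := by omega
          have hnP0 : ¬ ((F 0 - 1)/a ≤ (F (b+1) - 1 - a*(b+1))/(a+1)) := by
            intro hp0
            exact hcl' ⟨fun _ => hQ0, fun _ => hp0⟩
          omega
        end NoCycleBlue


/-- Upper bound: every 2-coloring of the complete graph on `2+a(b+1)+b(a+1)` vertices
contains a red `MC_{a+2}` or a blue `MC_{b+2}`. -/
lemma upperBound (a b N : ℕ) (hN : N = 2 + a*(b+1) + b*(a+1))
    (c : Fin N → Fin N → Bool) :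
    HasOrdCopy (monotoneCycle (a+2)) c true ∨ HasOrdCopy (monotoneCycle (b+2)) c false := by
  classical
  have hpos : 0 < N := by omega
  set x₀ : Fin N := ⟨0, hpos⟩ with hx₀
  set U := Finset.univ.filter (fun v : Fin N => x₀ < v ∧ c x₀ v = true) with hU
  set W := Finset.univ.filter (fun v : Fin N => x₀ < v ∧ c x₀ v = false) with hW
  have hUW : N - 1 ≤ U.card + W.card := by
    have hsub : Finset.univ.erase x₀ ⊆ U ∪ W := by
      intro v hv
      have hvne := Finset.ne_of_mem_erase hv
      have hlt : x₀ < v := by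
        have hvv : v.val ≠ 0 := by
          intro h
          exact hvne (Fin.ext (by simp [h, hx₀]))
        have hlt' : (x₀ : ℕ) < (v : ℕ) := by
          have : (x₀ : ℕ) = 0 := rfl
          omega
        exact hlt'
      rcases hcv : c x₀ v with _ | _
      · exact Finset.mem_union_right _ (by simp [hW, hlt, hcv])
      · exact Finset.mem_union_left _ (by simp [hU, hlt, hcv])
    calc N - 1 = (Finset.univ.erase x₀).card := by
          rw [Finset.card_erase_of_mem (Finset.mem_univ _), Finset.card_univ, Fintype.card_fin]
      _ ≤ (U ∪ W).card := Finset.card_le_card hsub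
      _ ≤ U.card + W.card := Finset.card_union_le _ _
  by_cases hUc : a*(b+1) + 1 ≤ U.card
  · have h := nbhd c true (m := a+2) (n := b+2) (by omega) (by omega) x₀ U
      (fun v hv => (Finset.mem_filter.mp hv).2)
      (by
        have h1 : a + 2 - 2 = a := by omega
        have h2 : b + 2 - 1 = b + 1 := by omega
        rw [h1, h2]
        exact hUc)
    simpa using h
  · have hWc : b*(a+1) + 1 ≤ W.card := by omega
    have h := nbhd c false (m := b+2) (n := a+2) (by omega) (by omega) x₀ W
      (fun v hv => (Finset.mem_filter.mp hv).2)
      (by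
        have h1 : b + 2 - 2 = b := by omega
        have h2 : a + 2 - 1 = a + 1 := by omega
        rw [h1, h2]
        exact hWc)
    rcases h with h | h
    · exact Or.inr h
    · exact Or.inl (by simpa using h)

/-- Lower bound: on fewer vertices, the explicit coloring avoids both cycles. -/
lemma lowerBound (a b : ℕ) {N : ℕ} (hN : N ≤ 1 + a*(b+1) + b*(a+1))
    (c : Fin N → Fin N → Bool) (hc : c = fun x y => colC a b x.val y.val) :
    ¬ HasOrdCopy (monotoneCycle (a+2)) c true ∧
      ¬ HasOrdCopy (monotoneCycle (b+2)) c false := by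
  constructor
  · rintro ⟨f, hf, hadj⟩
    set F : ℕ → ℕ := fun k => if h : k < a+2 then (f ⟨k, h⟩).val else 0 with hFdef
    have hF : ∀ (k : ℕ) (h : k < a+2), F k = (f ⟨k, h⟩).val := fun k h => dif_pos h
    apply noRed (a := a) (b := b) F
    · intro k l hkl hl
      rw [hF k (by omega), hF l hl]
      exact hf (show (⟨k, by omega⟩ : Fin (a+2)) < ⟨l, hl⟩ from hkl)
    · intro k hk
      rw [hF k hk]
      have := (f ⟨k, hk⟩).isLt
      omega
    · intro k hk
      rw [hF k (by omega), hF (k+1) hk]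
      have h := hadj ⟨k, by omega⟩ ⟨k+1, hk⟩ (show (k:ℕ) < k+1 by omega)
        (mc_adj_succ rfl)
      rw [hc] at h
      exact h
    · rw [hF 0 (by omega), hF (a+1) (by omega)]
      have h := hadj ⟨0, by omega⟩ ⟨a+1, by omega⟩ (show (0:ℕ) < a+1 by omega)
        (mc_adj_cyc (by omega) rfl (by simp))
      rw [hc] at h
      exact h
  · rintro ⟨f, hf, hadj⟩
    set F : ℕ → ℕ := fun k => if h : k < b+2 then (f ⟨k, h⟩).val else 0 with hFdef
    have hF : ∀ (k : ℕ) (h : k < b+2), F k = (f ⟨k, h⟩).val := fun k h => dif_pos h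
    apply noBlue (a := a) (b := b) F
    · intro k l hkl hl
      rw [hF k (by omega), hF l hl]
      exact hf (show (⟨k, by omega⟩ : Fin (b+2)) < ⟨l, hl⟩ from hkl)
    · intro k hk
      rw [hF k hk]
      have := (f ⟨k, hk⟩).isLt
      omega
    · intro k hk
      rw [hF k (by omega), hF (k+1) hk]
      have h := hadj ⟨k, by omega⟩ ⟨k+1, hk⟩ (show (k:ℕ) < k+1 by omega)
        (mc_adj_succ rfl)
      rw [hc] at h
      exact h
    · rw [hF 0 (by omega), hF (b+1) (by omega)]
      have h := hadj ⟨0, by omega⟩ ⟨b+1, by omega⟩ (show (0:ℕ) < b+1 by omega)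
        (mc_adj_cyc (by omega) rfl (by simp))
      rw [hc] at h
      exact h

theorem stmt8 (r s : ℕ) (hr : 2 ≤ r) (hs : 2 ≤ s) :
    (ordRamsey (monotoneCycle r) (monotoneCycle s) : ℤ) =
      2 * r * s - 3 * r - 3 * s + 6 := by
  obtain ⟨a, rfl⟩ : ∃ a, r = a + 2 := ⟨r - 2, by omega⟩
  obtain ⟨b, rfl⟩ : ∃ b, s = b + 2 := ⟨s - 2, by omega⟩
  have hval : ordRamsey (monotoneCycle (a+2)) (monotoneCycle (b+2))
      = 2 + a*(b+1) + b*(a+1) := by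
    have hmem : (2 + a*(b+1) + b*(a+1)) ∈
        {N | ∀ c : Fin N → Fin N → Bool,
          HasOrdCopy (monotoneCycle (a+2)) c true ∨ HasOrdCopy (monotoneCycle (b+2)) c false} :=
      fun c => upperBound a b _ rfl c
    apply le_antisymm
    · exact Nat.sInf_le hmem
    · apply le_csInf ⟨_, hmem⟩
      intro N hNmem
      by_contra hcon
      push_neg at hcon
      have hNle : N ≤ 1 + a*(b+1) + b*(a+1) := by omega
      have h := hNmem (fun x y => colC a b x.val y.val)
      have hl := lowerBound a b hNle (fun x y => colC a b x.val y.val) rfl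
      rcases h with h | h
      · exact hl.1 h
      · exact hl.2 h
  rw [hval]
  push_cast
  ring
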